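/- If the class of Banach spaces of density κ has a universal family {X_α : α < α*} under isomorphic embeddings with 1 ≤ α* < κ⁺, then there is a single Banach space of density κ that is universal for this class under isomorphic embeddings. Hence the universality number of Banach spaces of density κ is either 1 or at least κ⁺. -/

import Mathlib

open Cardinal

section lpAux

variable {α : Type} {E : α → Type} [∀ i, NormedAddCommGroup (E i)]

theorem lp_single_add [DecidableEq α] (p : ENNReal) (i : α) (a b : E i) :
    lp.single p i (a + b) = lp.single p i a + lp.single p i b := by
  refine lp.ext (funext fun j => ?_)
  by_cases h : j = i
  · subst h; simp [lp.single_apply_self]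
  · simp [lp.single_apply_ne p i _ h, lp.coeFn_add]

theorem lp_single_sub [DecidableEq α] (p : ENNReal) (i : α) (a b : E i) :
    lp.single p i (a - b) = lp.single p i a - lp.single p i b := by
  refine lp.ext (funext fun j => ?_)
  by_cases h : j = i
  · subst h; simp [lp.single_apply_self]
  · simp [lp.single_apply_ne p i _ h, lp.coeFn_sub]

theorem lp_norm_single [DecidableEq α] (i : α) (x : E i) :
    ‖lp.single (E := E) 1 i x‖ = ‖x‖ := by
  have hp : 0 < (1 : ENNReal).toReal := by norm_num
  simpa using lp.norm_single hp (Pi.single i x) i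

variable [∀ i, NormedSpace ℝ (E i)]

/-- The coordinate inclusion as a linear map. -/
noncomputable def lpSingleL [DecidableEq α] (i : α) : E i →ₗ[ℝ] lp E 1 where
  toFun x := lp.single 1 i x
  map_add' a b := lp_single_add 1 i a b
  map_smul' c a := lp.single_smul 1 i c a

theorem lpSingleL_apply [DecidableEq α] (i : α) (x : E i) :
    lpSingleL (E := E) i x = lp.single 1 i x := rfl

/-- The coordinate projection as a continuous linear map. -/
noncomputable def lpProjCLM (i : α) : lp E 1 →L[ℝ] E i :=
  LinearMap.mkContinuous
    { toFun := fun f => f i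
      map_add' := fun f g => by simp [lp.coeFn_add]
      map_smul' := fun c f => by simp [lp.coeFn_smul] }
    1 (fun f => by rw [one_mul]; exact lp.norm_apply_le_norm (p := 1) one_ne_zero f i)

theorem lpProjCLM_surjective [DecidableEq α] (i : α) :
    Function.Surjective (lpProjCLM (E := E) i) := fun y =>
  ⟨lp.single 1 i y, lp.single_apply_self 1 i y⟩

omit [∀ i, NormedSpace ℝ (E i)] in
/-- Finite sums of single elements with coordinates in dense sets are dense in `lp E 1`. -/
theorem lp_dense_range_sum_single [DecidableEq α] (D : ∀ i, Set (E i))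
    (hD : ∀ i, Dense (D i)) :
    Dense (Set.range fun l : List (Σ i : α, ↥(D i)) =>
      (l.map fun x => lp.single (E := E) 1 x.1 (x.2 : E x.1)).sum) := by
  rw [Metric.dense_iff]
  intro f r hr
  have hs : Filter.Tendsto
      (fun F : Finset α => ∑ i ∈ F, lp.single 1 i ((f : ∀ j, E j) i))
      Filter.atTop (nhds f) := lp.hasSum_single (by norm_num) f
  obtain ⟨F, hF⟩ := (Metric.tendsto_nhds.mp hs (r / 2) (by positivity)).exists
  have hch : ∀ i : α, ∃ d : E i, d ∈ D i ∧
      ‖(f : ∀ j, E j) i - d‖ < r / (2 * (F.card + 1)) := by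
    intro i
    obtain ⟨d, hd, hd'⟩ := Metric.mem_closure_iff.mp (hD i ((f : ∀ j, E j) i))
      (r / (2 * (F.card + 1))) (by positivity)
    exact ⟨d, hd, by rwa [dist_eq_norm] at hd'⟩
  choose d hd1 hd2 using hch
  refine ⟨∑ i ∈ F, lp.single 1 i (d i), Metric.mem_ball'.mpr ?_, ?_⟩
  · have h1 : dist f (∑ i ∈ F, lp.single 1 i ((f : ∀ j, E j) i)) < r / 2 := by
      rw [dist_comm]; exact hF
    have h2 : dist (∑ i ∈ F, lp.single 1 i ((f : ∀ j, E j) i))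
        (∑ i ∈ F, lp.single 1 i (d i)) ≤ r / 2 := by
      rw [dist_eq_norm, ← Finset.sum_sub_distrib]
      have he : ∀ i ∈ F, lp.single 1 i ((f : ∀ j, E j) i) - lp.single 1 i (d i)
          = lp.single 1 i ((f : ∀ j, E j) i - d i) := fun i _ =>
        (lp_single_sub 1 i _ _).symm
      rw [Finset.sum_congr rfl he]
      calc ‖∑ i ∈ F, lp.single 1 i ((f : ∀ j, E j) i - d i)‖
          ≤ ∑ i ∈ F, ‖lp.single (E := E) 1 i ((f : ∀ j, E j) i - d i)‖ := norm_sum_le _ _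
        _ ≤ ∑ _i ∈ F, r / (2 * (F.card + 1)) := by
            refine Finset.sum_le_sum fun i _ => ?_
            rw [lp_norm_single]
            exact (hd2 i).le
        _ = F.card * (r / (2 * (F.card + 1))) := by
            rw [Finset.sum_const, nsmul_eq_mul]
        _ ≤ r / 2 := by
            have h0 : (0:ℝ) < 2 * ((F.card : ℝ) + 1) := by positivity
            have ht : r / (2 * ((F.card:ℝ) + 1)) * (2 * ((F.card:ℝ) + 1)) = r :=
              div_mul_cancel₀ r h0.ne'
            have ht0 : 0 < r / (2 * ((F.card:ℝ) + 1)) := by positivity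
            have hc0 : (0:ℝ) ≤ (F.card : ℝ) := Nat.cast_nonneg _
            nlinarith [ht, ht0, hc0]
    calc dist f (∑ i ∈ F, lp.single 1 i (d i))
        ≤ dist f (∑ i ∈ F, lp.single 1 i ((f : ∀ j, E j) i))
          + dist (∑ i ∈ F, lp.single 1 i ((f : ∀ j, E j) i))
            (∑ i ∈ F, lp.single 1 i (d i)) := dist_triangle _ _ _
      _ < r / 2 + r / 2 := by linarith
      _ = r := by ring
  · refine ⟨F.toList.map fun i => ⟨i, ⟨d i, hd1 i⟩⟩, ?_⟩
    show (((F.toList.map fun i => (⟨i, ⟨d i, hd1 i⟩⟩ : Σ i : α, ↥(D i))).map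
      fun x => lp.single 1 x.1 (x.2 : E x.1)).sum) = _
    rw [List.map_map]
    exact Finset.sum_map_toList F (fun i => lp.single 1 i (d i))

end lpAux

/-- A Banach space of density character `κ`: the smallest cardinality of a dense
subset equals `κ`. -/
structure BanachOfDensity (κ : Cardinal.{0}) : Type 1 where
  carrier : Type
  [norm : NormedAddCommGroup carrier]
  [sp : NormedSpace ℝ carrier]
  [compl : CompleteSpace carrier]
  dens : sInf {c : Cardinal.{0} | ∃ s : Set carrier, Dense s ∧ Cardinal.mk s = c} = κ

attribute [instance] BanachOfDensity.norm BanachOfDensity.sp BanachOfDensity.compl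

/-- `X` isomorphically embeds into `Y`: there is a linear map with a constant
`D > 0` with `‖x‖/D ≤ ‖T x‖ ≤ D‖x‖` for all `x`. -/
def IsoEmbeds {κ : Cardinal.{0}} (X Y : BanachOfDensity κ) : Prop :=
  ∃ T : X.carrier →ₗ[ℝ] Y.carrier, ∃ D : ℝ, 0 < D ∧
    ∀ x : X.carrier, ‖x‖ / D ≤ ‖T x‖ ∧ ‖T x‖ ≤ D * ‖x‖

/-- If the class of Banach spaces of density `κ` has a universal family of size
`< κ⁺` (indexed by a nonempty set of cardinality `≤ κ`) under isomorphic
embeddings, then there is a single universal Banach space of density `κ`.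
Hence the universality number is either `1` or at least `κ⁺`. -/
theorem densSet_nonempty {κ : Cardinal.{0}} (X : BanachOfDensity κ) :
    {c : Cardinal.{0} | ∃ s : Set X.carrier, Dense s ∧ Cardinal.mk s = c}.Nonempty :=
  ⟨Cardinal.mk (Set.univ : Set X.carrier), Set.univ, dense_univ, rfl⟩

theorem exists_dense_of_density {κ : Cardinal.{0}} (X : BanachOfDensity κ) :
    ∃ s : Set X.carrier, Dense s ∧ Cardinal.mk s = κ := by
  have h := csInf_mem (densSet_nonempty X)
  rw [X.dens] at h
  exact h

theorem le_mk_dense {κ : Cardinal.{0}} (X : BanachOfDensity κ) {s : Set X.carrier}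
    (hs : Dense s) : κ ≤ Cardinal.mk s := by
  have h : sInf {c : Cardinal.{0} | ∃ s : Set X.carrier, Dense s ∧ Cardinal.mk s = c}
      ≤ Cardinal.mk s := csInf_le' ⟨s, hs, rfl⟩
  rwa [X.dens] at h

set_option maxHeartbeats 2000000 in
theorem stmt0 (κ : Cardinal.{0}) (hκ : Cardinal.aleph0 ≤ κ)
    (ι : Type) (hne : Nonempty ι) (hι : Cardinal.mk ι ≤ κ)
    (Xs : ι → BanachOfDensity κ)
    (huniv : ∀ X : BanachOfDensity κ, ∃ i : ι, IsoEmbeds X (Xs i)) :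
    ∃ Y : BanachOfDensity κ, ∀ X : BanachOfDensity κ, IsoEmbeds X Y := by
  classical
  choose Di hDid hDik using fun i => exists_dense_of_density (Xs i)
  set Dset : Set (lp (fun i => (Xs i).carrier) 1) :=
      Set.range fun l : List (Σ i : ι, ↥(Di i)) =>
        (l.map fun x => lp.single (E := fun i => (Xs i).carrier) 1 x.1
          (x.2 : (Xs x.1).carrier)).sum with hDsetdef
  have hDdense : Dense Dset := lp_dense_range_sum_single Di hDid
  have hDcard : Cardinal.mk Dset ≤ κ := by
    calc Cardinal.mk Dset ≤ Cardinal.mk (List (Σ i : ι, ↥(Di i))) := Cardinal.mk_range_le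
      _ ≤ max Cardinal.aleph0 (Cardinal.mk (Σ i : ι, ↥(Di i))) := Cardinal.mk_list_le_max _
      _ ≤ κ := by
          refine max_le hκ ?_
          have h1 : Cardinal.mk (Σ i : ι, ↥(Di i)) = Cardinal.mk ι * κ := by
            rw [Cardinal.mk_sigma]
            simp_rw [hDik]
            exact Cardinal.sum_const' ι κ
          rw [h1]
          calc Cardinal.mk ι * κ ≤ κ * κ := mul_le_mul_left hι κ
            _ = κ := Cardinal.mul_eq_self hκ
  have hdens : sInf {c : Cardinal.{0} |
      ∃ s : Set (lp (fun i => (Xs i).carrier) 1), Dense s ∧ Cardinal.mk s = c} = κ := by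
    refine le_antisymm (le_trans (csInf_le' ⟨Dset, hDdense, rfl⟩) hDcard) ?_
    refine le_csInf ⟨Cardinal.mk Dset, Dset, hDdense, rfl⟩ ?_
    rintro c ⟨s, hs, rfl⟩
    obtain ⟨i0⟩ := hne
    have himg : Dense ((lpProjCLM (E := fun i => (Xs i).carrier) i0) '' s) :=
      ((lpProjCLM_surjective i0).denseRange).dense_image
        (lpProjCLM (E := fun i => (Xs i).carrier) i0).continuous hs
    calc κ ≤ Cardinal.mk ((lpProjCLM (E := fun i => (Xs i).carrier) i0) '' s) :=
          le_mk_dense (Xs i0) himg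
      _ ≤ Cardinal.mk s := Cardinal.mk_image_le
  refine ⟨⟨lp (fun i => (Xs i).carrier) 1, hdens⟩, ?_⟩
  intro X
  obtain ⟨i, T, D, hD, hT⟩ := huniv X
  refine ⟨(lpSingleL (E := fun i => (Xs i).carrier) i).comp T, D, hD, fun x => ?_⟩
  have hn : ‖(lpSingleL (E := fun i => (Xs i).carrier) i) (T x)‖ = ‖T x‖ := by
    rw [lpSingleL_apply]
    exact lp_norm_single (E := fun i => (Xs i).carrier) i (T x)
  simp only [LinearMap.comp_apply]
  rw [hn]
  exact hT x
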